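/- For every λ > 0, the function x ↦ (4√2/(λ√π))·e^{−λ²/2}·sinh(2λx)·x·e^{−2x²} for x > 0 integrates to 1 over (0,∞), i.e., it is a probability density. -/

import Mathlib

open Real MeasureTheory

lemma oddGauss : ∫ x : ℝ, x * Real.exp (-2 * x ^ 2) = 0 := by
  have h := MeasureTheory.integral_neg_eq_self (fun x : ℝ => x * Real.exp (-2 * x ^ 2))
    (volume : MeasureTheory.Measure ℝ)
  simp only [neg_mul, neg_sq, neg_neg, integral_neg] at h
  simp only [neg_mul]
  linarith

lemma intShift (μ : ℝ) :
    Integrable (fun x : ℝ => x * Real.exp (-2 * x ^ 2 + 2 * μ * x)) := by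
  have hint : Integrable (fun u : ℝ =>
      Real.exp (μ ^ 2 / 2) * (u * Real.exp (-2 * u ^ 2))
        + (Real.exp (μ ^ 2 / 2) * (μ / 2)) * Real.exp (-2 * u ^ 2)) :=
    ((integrable_mul_exp_neg_mul_sq two_pos).const_mul _).add
      ((integrable_exp_neg_mul_sq two_pos).const_mul _)
  have := hint.comp_sub_right (μ / 2)
  convert this using 1
  funext x
  have : -2 * x ^ 2 + 2 * μ * x = -2 * (x - μ / 2) ^ 2 + μ ^ 2 / 2 := by ring
  rw [this, Real.exp_add]
  ring

lemma keyI (μ : ℝ) :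
    ∫ x : ℝ, x * Real.exp (-2 * x ^ 2 + 2 * μ * x)
      = μ / 2 * Real.sqrt (π / 2) * Real.exp (μ ^ 2 / 2) := by
  have h : ∫ x : ℝ, (x + μ / 2) * Real.exp (-2 * (x + μ / 2) ^ 2 + 2 * μ * (x + μ / 2))
      = ∫ x : ℝ, x * Real.exp (-2 * x ^ 2 + 2 * μ * x) :=
    MeasureTheory.integral_add_right_eq_self
      (fun x : ℝ => x * Real.exp (-2 * x ^ 2 + 2 * μ * x)) (μ / 2)
  rw [← h]
  have hfun : ∀ x : ℝ,
      (x + μ / 2) * Real.exp (-2 * (x + μ / 2) ^ 2 + 2 * μ * (x + μ / 2))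
        = Real.exp (μ ^ 2 / 2) * (x * Real.exp (-2 * x ^ 2))
          + (Real.exp (μ ^ 2 / 2) * (μ / 2)) * Real.exp (-2 * x ^ 2) := by
    intro x
    rw [show -2 * (x + μ / 2) ^ 2 + 2 * μ * (x + μ / 2) = (-2 * x ^ 2) + μ ^ 2 / 2 by ring,
      Real.exp_add]
    ring
  simp only [hfun]
  rw [integral_add ((integrable_mul_exp_neg_mul_sq two_pos).const_mul _)
    ((integrable_exp_neg_mul_sq two_pos).const_mul _), integral_const_mul, integral_const_mul,
    oddGauss, integral_gaussian]
  ring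

lemma keyIoi (lam : ℝ) :
    ∫ x in Set.Ioi (0 : ℝ), Real.sinh (2 * lam * x) * x * Real.exp (-2 * x ^ 2)
      = lam / 4 * Real.sqrt (π / 2) * Real.exp (lam ^ 2 / 2) := by
  have habs : ∫ x : ℝ, Real.sinh (2 * lam * |x|) * |x| * Real.exp (-2 * x ^ 2)
      = 2 * ∫ x in Set.Ioi (0 : ℝ), Real.sinh (2 * lam * x) * x * Real.exp (-2 * x ^ 2) := by
    have := _root_.integral_comp_abs
      (f := fun x : ℝ => Real.sinh (2 * lam * x) * x * Real.exp (-2 * x ^ 2))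
    simpa [sq_abs] using this
  have heven : ∀ x : ℝ, Real.sinh (2 * lam * |x|) * |x| * Real.exp (-2 * x ^ 2)
      = Real.sinh (2 * lam * x) * x * Real.exp (-2 * x ^ 2) := by
    intro x
    rcases abs_choice x with h | h
    · rw [h]
    · rw [h]; simp only [mul_neg, Real.sinh_neg]; ring
  simp only [heven] at habs
  have hsplit : ∀ x : ℝ, Real.sinh (2 * lam * x) * x * Real.exp (-2 * x ^ 2)
      = (1 / 2) * (x * Real.exp (-2 * x ^ 2 + 2 * lam * x))
        - (1 / 2) * (x * Real.exp (-2 * x ^ 2 + 2 * (-lam) * x)) := by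
    intro x
    rw [Real.sinh_eq, Real.exp_add, Real.exp_add]
    ring_nf
  have hR : ∫ x : ℝ, Real.sinh (2 * lam * x) * x * Real.exp (-2 * x ^ 2)
      = lam / 2 * Real.sqrt (π / 2) * Real.exp (lam ^ 2 / 2) := by
    simp only [hsplit]
    rw [integral_sub ((intShift lam).const_mul _) ((intShift (-lam)).const_mul _),
      integral_const_mul, integral_const_mul, keyI lam, keyI (-lam)]
    ring_nf
  rw [hR] at habs
  linarith

/-- For every `λ > 0`, the function
`(4√2/(λ√π)) e^{-λ²/2} sinh(2λx) x e^{-2x²}` integrates to 1 over `(0,∞)`. -/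
theorem stmt18 (lam : ℝ) (hlam : 0 < lam) :
    ∫ x in Set.Ioi (0 : ℝ),
        4 * Real.sqrt 2 / (lam * Real.sqrt π) * Real.exp (-lam ^ 2 / 2)
          * Real.sinh (2 * lam * x) * x * Real.exp (-2 * x ^ 2) = 1 := by
  have hc : ∀ x : ℝ,
      4 * Real.sqrt 2 / (lam * Real.sqrt π) * Real.exp (-lam ^ 2 / 2)
          * Real.sinh (2 * lam * x) * x * Real.exp (-2 * x ^ 2)
        = (4 * Real.sqrt 2 / (lam * Real.sqrt π) * Real.exp (-lam ^ 2 / 2))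
          * (Real.sinh (2 * lam * x) * x * Real.exp (-2 * x ^ 2)) := by
    intro x; ring
  simp only [hc]
  rw [MeasureTheory.integral_const_mul, keyIoi lam]
  have hπ : (0 : ℝ) < π := Real.pi_pos
  have hs2 : Real.sqrt (π / 2) = Real.sqrt π / Real.sqrt 2 := Real.sqrt_div hπ.le 2
  have hexp : Real.exp (-lam ^ 2 / 2) * Real.exp (lam ^ 2 / 2) = 1 := by
    rw [← Real.exp_add, show -lam ^ 2 / 2 + lam ^ 2 / 2 = 0 by ring, Real.exp_zero]
  have h2 : (0 : ℝ) < Real.sqrt 2 := Real.sqrt_pos.mpr two_pos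
  have hπ' : (0 : ℝ) < Real.sqrt π := Real.sqrt_pos.mpr hπ
  rw [hs2]
  field_simp
  rw [neg_div] at hexp
  nlinarith [hexp, Real.exp_pos (-lam ^ 2 / 2), Real.exp_pos (lam ^ 2 / 2),
    mul_pos hlam hπ', mul_pos h2 (mul_pos hlam hπ')]
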